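/- arXiv:1401.6211 — 2 statements merged into one kernel-verified Lean document; each statement's English description precedes it below -/
import Mathlib

section
/- Let f : A → B be a differential homomorphism of Keigher differential rings. If the induced map f* : Spec B → Spec A on prime spectra is surjective, then its restriction to differential spectra f*_Δ : Spec^Δ B → Spec^Δ A (prime differential ideals) is also surjective. -/
/-- A derivation on a commutative ring, as a predicate. -/
def IsDerivationFn {R : Type*} [CommRing R] (d : R → R) : Prop :=
  (∀ a b : R, d (a + b) = d a + d b) ∧ (∀ a b : R, d (a * b) = a * d b + d a * b)

/-- A differential ideal: an ideal stable under the derivation. -/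
def IsDiffIdeal {R : Type*} [CommRing R] (d : R → R) (I : Ideal R) : Prop :=
  ∀ x ∈ I, d x ∈ I

/-- A Keigher ring: the radical of every differential ideal is differential. -/
def IsKeigher {R : Type*} [CommRing R] (d : R → R) : Prop :=
  IsDerivationFn d ∧ ∀ I : Ideal R, IsDiffIdeal d I → IsDiffIdeal d I.radical

lemma deriv_zero_of_isDerivationFn {R : Type*} [CommRing R] {d : R → R} (hd : IsDerivationFn d) : d 0 = 0 := by
  have := hd.1 0 0
  simpa using this

/-- In a radical differential ideal, `a*b ∈ Q` implies `a * d b ∈ Q`. -/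
lemma mul_deriv_mem {R : Type*} [CommRing R] {d : R → R} (hd : IsDerivationFn d)
    {Q : Ideal R} (hQd : IsDiffIdeal d Q) (hQr : Q.radical ≤ Q)
    {a b : R} (hab : a * b ∈ Q) : a * d b ∈ Q := by
  have h1 : d (a * b) ∈ Q := hQd _ hab
  rw [hd.2] at h1
  have h2 : (a * d b) * (a * d b + d a * b) ∈ Q := Q.mul_mem_left _ h1
  have h3 : (a * b) * (d a * d b) ∈ Q := Q.mul_mem_right _ hab
  have h4 : (a * d b) ^ 2 ∈ Q := by
    have : (a * d b) ^ 2 = (a * d b) * (a * d b + d a * b) - (a * b) * (d a * d b) := by ring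
    rw [this]; exact Q.sub_mem h2 h3
  exact hQr ⟨2, h4⟩

/-- The colon ideal of a radical differential ideal by an element is differential. -/
lemma colon_diff {R : Type*} [CommRing R] {d : R → R} (hd : IsDerivationFn d)
    {Q : Ideal R} (hQd : IsDiffIdeal d Q) (hQr : Q.radical ≤ Q) (x : R) :
    IsDiffIdeal d (Q.colon (Ideal.span {x})) := by
  intro y hy
  rw [Ideal.mem_colon_span_singleton] at hy ⊢
  have : x * y ∈ Q := by rwa [mul_comm]
  have := mul_deriv_mem hd hQd hQr this
  rwa [mul_comm]

/-- surjectivity on prime spectra implies surjectivity on differential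
spectra. -/
theorem surjective_spec_implies_surjective_diff_spec
    {A B : Type*} [CommRing A] [CommRing B]
    (dA : A → A) (dB : B → B) (hA : IsKeigher dA) (hB : IsKeigher dB)
    (f : A →+* B) (hf : ∀ a : A, f (dA a) = dB (f a))
    (hsurj : ∀ 𝔭 : Ideal A, 𝔭.IsPrime → ∃ 𝔮 : Ideal B, 𝔮.IsPrime ∧ Ideal.comap f 𝔮 = 𝔭) :
    ∀ 𝔭 : Ideal A, 𝔭.IsPrime → IsDiffIdeal dA 𝔭 →
      ∃ 𝔮 : Ideal B, 𝔮.IsPrime ∧ IsDiffIdeal dB 𝔮 ∧ Ideal.comap f 𝔮 = 𝔭 := by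
  intro 𝔭 hp hpd
  obtain ⟨𝔮₀, hq0p, hq0c⟩ := hsurj 𝔭 hp
  -- the multiplicative set S = f '' 𝔭ᶜ
  set S : Set B := f '' (𝔭 : Set A)ᶜ with hS
  have hSmul : ∀ s ∈ S, ∀ t ∈ S, s * t ∈ S := by
    rintro _ ⟨a, ha, rfl⟩ _ ⟨b, hb, rfl⟩
    exact ⟨a * b, fun h => ((hp.mem_or_mem h).elim ha hb), map_mul f a b⟩
  -- J = extension of 𝔭, a differential ideal
  set J : Ideal B := Ideal.map f 𝔭 with hJ
  have hJd : IsDiffIdeal dB J := by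
    intro x hx
    have : x ∈ J ∧ dB x ∈ J := by
      refine Submodule.span_induction (p := fun x _ => x ∈ J ∧ dB x ∈ J) ?_ ?_ ?_ ?_ hx
      · rintro _ ⟨a, ha, rfl⟩
        exact ⟨Ideal.mem_map_of_mem f ha, by rw [← hf]; exact Ideal.mem_map_of_mem f (hpd a ha)⟩
      · exact ⟨zero_mem _, by rw [deriv_zero_of_isDerivationFn hB.1]; exact zero_mem _⟩
      · rintro x y _ _ ⟨hx1, hx2⟩ ⟨hy1, hy2⟩
        exact ⟨add_mem hx1 hy1, by rw [hB.1.1]; exact add_mem hx2 hy2⟩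
      · rintro r x _ ⟨hx1, hx2⟩
        refine ⟨J.smul_mem r hx1, ?_⟩
        have : dB (r * x) = r * dB x + dB r * x := hB.1.2 r x
        simpa [smul_eq_mul, this, mul_comm] using add_mem (J.mul_mem_left r hx2) (J.mul_mem_right (dB r) hx1)
    exact this.2
  have hq0S : ∀ s ∈ S, s ∉ 𝔮₀ := by
    rintro _ ⟨a, ha, rfl⟩ hmem
    exact ha (by rw [← hq0c]; exact hmem)
  have hJq0 : J ≤ 𝔮₀ := Ideal.map_le_iff_le_comap.2 (le_of_eq hq0c.symm)
  -- Zorn: maximal differential ideal containing J and disjoint from S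
  set 𝒮 : Set (Ideal B) := {I | IsDiffIdeal dB I ∧ J ≤ I ∧ ∀ s ∈ S, s ∉ I} with h𝒮
  have hJ𝒮 : J ∈ 𝒮 := ⟨hJd, le_rfl, fun s hs hsJ => hq0S s hs (hJq0 hsJ)⟩
  obtain ⟨Q, hJQ, hQmax⟩ := zorn_le_nonempty₀ 𝒮 (fun c hc hchain y hy => by
    refine ⟨sSup c, ⟨?_, ?_, ?_⟩, fun z hz => le_sSup hz⟩
    · intro x hx
      obtain ⟨I, hI, hxI⟩ := (Submodule.mem_sSup_of_directed ⟨y, hy⟩ hchain.directedOn).1 hx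
      exact Submodule.mem_sSup_of_mem hI ((hc hI).1 x hxI)
    · exact le_trans (hc hy).2.1 (le_sSup hy)
    · intro s hs hsQ
      obtain ⟨I, hI, hsI⟩ := (Submodule.mem_sSup_of_directed ⟨y, hy⟩ hchain.directedOn).1 hsQ
      exact (hc hI).2.2 s hs hsI) J hJ𝒮
  obtain ⟨hQd, hJleQ, hQS⟩ := hQmax.1
  -- S is closed under positive powers, so Q is radical
  have hSpow : ∀ s ∈ S, ∀ n : ℕ, 0 < n → s ^ n ∈ S := by
    rintro _ ⟨a, ha, rfl⟩ n hn
    exact ⟨a ^ n, fun h => ha (hp.mem_of_pow_mem n h), map_pow f a n⟩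
  have hQrad : Q.radical ≤ Q := by
    have hmem : Q.radical ∈ 𝒮 := by
      refine ⟨hB.2 Q hQd, le_trans hJleQ Q.le_radical, ?_⟩
      rintro s hs ⟨n, hn⟩
      rcases Nat.eq_zero_or_pos n with rfl | hnpos
      · simp only [pow_zero] at hn
        exact hQS _ hs (by simpa using Q.mul_mem_left s hn)
      · exact hQS _ (hSpow s hs n hnpos) hn
    exact (hQmax.2 hmem Q.le_radical : Q.radical ≤ Q)
  -- Q is prime
  have hQne : Q ≠ ⊤ := by
    intro h
    refine hQS 1 ⟨1, fun h1 => hp.ne_top ((Ideal.eq_top_iff_one 𝔭).2 h1), map_one f⟩ ?_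
    rw [h]; trivial
  have hQprime : Q.IsPrime := by
    refine ⟨hQne, ?_⟩
    intro a b hab
    by_contra hcon
    push_neg at hcon
    obtain ⟨haQ, hbQ⟩ := hcon
    have hQC : ∀ x : B, Q ≤ Q.colon (Ideal.span {x}) := by
      intro x y hy
      rw [Ideal.mem_colon_span_singleton]
      exact Q.mul_mem_right x hy
    -- colon by b
    set C := Q.colon (Ideal.span {b}) with hC
    have haC : a ∈ C := by
      rw [hC, Ideal.mem_colon_span_singleton]; exact hab
    by_cases hCS : ∀ s ∈ S, s ∉ C
    · have hCmem : C ∈ 𝒮 :=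
        ⟨colon_diff hB.1 hQd hQrad b, le_trans hJleQ (hQC b), hCS⟩
      exact haQ (hQmax.2 hCmem (hQC b) haC)
    · push_neg at hCS
      obtain ⟨s, hsS, hsC⟩ := hCS
      rw [hC, Ideal.mem_colon_span_singleton] at hsC
      -- s * b ∈ Q; consider colon by s
      set D := Q.colon (Ideal.span {s}) with hD
      have hbD : b ∈ D := by
        rw [hD, Ideal.mem_colon_span_singleton]
        rwa [mul_comm]
      have hDS : ∀ t ∈ S, t ∉ D := by
        intro t htS htD
        rw [hD, Ideal.mem_colon_span_singleton] at htD
        exact hQS _ (hSmul t htS s hsS) htD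
      have hDmem : D ∈ 𝒮 :=
        ⟨colon_diff hB.1 hQd hQrad s, le_trans hJleQ (hQC s), hDS⟩
      exact hbQ (hQmax.2 hDmem (hQC s) hbD)
  refine ⟨Q, hQprime, hQd, ?_⟩
  ext a
  simp only [Ideal.mem_comap]
  constructor
  · intro hfa
    by_contra ha
    exact hQS (f a) ⟨a, ha, rfl⟩ hfa
  · intro ha
    exact hJleQ (Ideal.mem_map_of_mem f ha)
end

section
/- Let A ⊆ B be differential integral domains of characteristic zero with B integral over A and A integrally closed in its fraction field. Then the inclusion has the going-down property for prime differential ideals: if 𝔭₁ ⊆ 𝔭₂ are prime differential ideals of A and 𝔮₂ is a prime differential ideal of B with 𝔮₂ ∩ A = 𝔭₂, then there exists a prime differential ideal 𝔮₁ ⊆ 𝔮₂ of B with 𝔮₁ ∩ A = 𝔭₁. -/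
open Polynomial

section Keigher
variable {R : Type*} [CommRing R] {d : R → R}

lemma derivFn_pow (hd : IsDerivationFn d) (x : R) :
    ∀ m : ℕ, d (x ^ (m + 1)) = ((m + 1 : ℕ) : R) * x ^ m * d x := by
  intro m
  induction m with
  | zero => simp [hd.2]  -- d (x^1) = d x ; careful
  | succ m ih =>
      have : x ^ (m + 2) = x * x ^ (m + 1) := by ring
      rw [this, hd.2, ih]
      push_cast
      ring

variable [Algebra ℚ R]

lemma nat_cancel_mem {I : Ideal R} {n : ℕ} (hn : n ≠ 0) {z : R}
    (h : (n : R) * z ∈ I) : z ∈ I := by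
  have h1 : algebraMap ℚ R ((n : ℚ)⁻¹) * ((n : R) * z) ∈ I := Ideal.mul_mem_left _ _ h
  have h2 : algebraMap ℚ R ((n : ℚ)⁻¹) * ((n : R) * z) = z := by
    rw [← mul_assoc]
    have : (n : R) = algebraMap ℚ R (n : ℚ) := by simp
    rw [this, ← map_mul]
    rw [inv_mul_cancel₀ (by exact_mod_cast hn)]
    simp
  rwa [h2] at h1

lemma keigher_radical (hd : IsDerivationFn d) {I : Ideal R} (hI : IsDiffIdeal d I) :
    IsDiffIdeal d I.radical := by
  intro x hx
  obtain ⟨n, hn⟩ := Ideal.mem_radical_iff.mp hx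
  rcases Nat.eq_zero_or_pos n with rfl | hpos
  · have hI1 : I = ⊤ := (Ideal.eq_top_iff_one I).mpr (by simpa using hn)
    subst hI1
    exact Ideal.le_radical Submodule.mem_top
  obtain ⟨m, rfl⟩ : ∃ m, n = m + 1 := ⟨n - 1, by omega⟩
  -- base : x ^ m * d x ∈ I
  have base : x ^ m * d x ∈ I := by
    have h1 : d (x ^ (m + 1)) ∈ I := hI _ hn
    rw [derivFn_pow hd] at h1
    rw [mul_assoc] at h1
    exact nat_cancel_mem (by omega) h1
  -- claim : ∀ k j, j + k = m → x ^ j * (d x) ^ (2 * k + 1) ∈ I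
  have claim : ∀ k : ℕ, ∀ j : ℕ, j + k = m → x ^ j * d x ^ (2 * k + 1) ∈ I := by
    intro k
    induction k with
    | zero =>
        intro j hj
        have : j = m := by omega
        subst this
        simpa using base
    | succ k ih =>
        intro j hj
        have hy : x ^ (j + 1) * d x ^ (2 * k + 1) ∈ I := ih (j + 1) (by omega)
        have h1 : d (x ^ (j + 1) * d x ^ (2 * k + 1)) ∈ I := hI _ hy
        have h2 : d (x ^ (j + 1) * d x ^ (2 * k + 1)) * d x ∈ I := Ideal.mul_mem_right _ _ h1
        have h3 : ((2 * k + 1 : ℕ) : R) * ((x ^ (j + 1) * d x ^ (2 * k + 1)) * d (d x)) ∈ I :=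
          Ideal.mul_mem_left _ _ (Ideal.mul_mem_right _ _ hy)
        have h4 : d (x ^ (j + 1) * d x ^ (2 * k + 1)) * d x
            - ((2 * k + 1 : ℕ) : R) * ((x ^ (j + 1) * d x ^ (2 * k + 1)) * d (d x))
            = ((j + 1 : ℕ) : R) * (x ^ j * d x ^ (2 * (k + 1) + 1)) := by
          rw [hd.2, derivFn_pow hd, derivFn_pow hd]
          push_cast
          ring
        have h5 := Ideal.sub_mem I h2 h3
        rw [h4] at h5
        exact nat_cancel_mem (by omega) h5
  have := claim m 0 (by omega)
  exact ⟨2 * m + 1, by simpa using this⟩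

end Keigher

section P2
variable {R : Type*} [CommRing R] {d : R → R}

/-- In a radical differential ideal: u*v ∈ K → u * d v ∈ K. Stated for K = I.radical. -/
lemma radical_mul_deriv (hd : IsDerivationFn d) {I : Ideal R}
    (hK : IsDiffIdeal d I.radical) {u v : R} (huv : u * v ∈ I.radical) :
    u * d v ∈ I.radical := by
  have h1 : d (u * v) ∈ I.radical := hK _ huv
  have h2 : (u * d v) * d (u * v) ∈ I.radical := Ideal.mul_mem_left _ _ h1
  have h3 : (u * v) * (d u * d v) ∈ I.radical := Ideal.mul_mem_right _ _ huv
  have h4 : (u * d v) ^ 2 = (u * d v) * d (u * v) - (u * v) * (d u * d v) := by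
    rw [hd.2]; ring
  have h5 : (u * d v) ^ 2 ∈ I.radical := by rw [h4]; exact Ideal.sub_mem _ h2 h3
  exact Ideal.mem_radical_of_pow_mem h5

/-- A minimal prime over I: every element has a multiple (by something outside p) in I.radical. -/
lemma exists_mul_mem_radical_of_minimal {I p : Ideal R} (hp : p ∈ I.minimalPrimes)
    {x : R} (hx : x ∈ p) : ∃ s : R, s ∉ p ∧ s * x ∈ I.radical := by
  have hpp : p.IsPrime := hp.1.1
  by_contra hcon
  push_neg at hcon
  -- the submonoid {s * x^n | s ∉ p}
  let M : Submonoid R :=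
    { carrier := {b | ∃ s, s ∉ p ∧ ∃ n : ℕ, b = s * x ^ n}
      one_mem' := ⟨1, fun h => hpp.ne_top ((Ideal.eq_top_iff_one p).mpr h), 0, by simp⟩
      mul_mem' := by
        rintro a b ⟨s, hs, n, rfl⟩ ⟨t, ht, m, rfl⟩
        refine ⟨s * t, fun h => ?_, n + m, by ring⟩
        rcases hpp.mem_or_mem h with h | h
        exacts [hs h, ht h] }
  have hdisj : Disjoint (I : Set R) (M : Set R) := by
    rw [Set.disjoint_left]
    rintro b hbI ⟨s, hs, n, rfl⟩
    refine hcon s hs (Ideal.mem_radical_of_pow_mem (m := n + 1) ?_)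
    have : (s * x) ^ (n + 1) = (s * x ^ n) * (s ^ n * x) := by ring
    rw [this]
    exact Ideal.mul_mem_right _ _ (Ideal.le_radical hbI)
  obtain ⟨q, hqp, hIq, hqdisj⟩ := Ideal.exists_le_prime_disjoint I M hdisj
  have hqlep : q ≤ p := by
    intro z hz
    by_contra hzp
    exact Set.disjoint_left.mp hqdisj hz ⟨z, hzp, 0, by simp⟩
  have : p ≤ q := hp.2 ⟨hqp, hIq⟩ hqlep
  exact Set.disjoint_left.mp hqdisj (this hx) ⟨1, fun h => hpp.ne_top ((Ideal.eq_top_iff_one p).mpr h), 1, by simp⟩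

variable {A B : Type*} [CommRing A] [CommRing B] [Algebra A B]

/-- The extension of a differential ideal is differential when the derivations are compatible. -/
lemma map_isDiffIdeal {dA : A → A} {dB : B → B} (hdB : IsDerivationFn dB)
    (hcompat : ∀ a : A, algebraMap A B (dA a) = dB (algebraMap A B a))
    {𝔭 : Ideal A} (h𝔭 : IsDiffIdeal dA 𝔭) :
    IsDiffIdeal dB (Ideal.map (algebraMap A B) 𝔭) := by
  have hzero : dB 0 = 0 := by
    have h := hdB.1 0 0
    rw [add_zero] at h
    simpa using h
  intro x hx
  rw [Ideal.map] at hx ⊢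
  induction hx using Submodule.span_induction with
  | mem b hb =>
      obtain ⟨a, ha, rfl⟩ := hb
      rw [← hcompat]
      exact Ideal.subset_span ⟨dA a, h𝔭 a ha, rfl⟩
  | zero => rw [hzero]; exact zero_mem _
  | add y z hy hz hy' hz' => rw [hdB.1]; exact add_mem hy' hz'
  | smul c y hy hy' =>
      have : dB (c • y) = c * dB y + dB c * y := by
        simpa [smul_eq_mul] using hdB.2 c y
      rw [this]
      exact add_mem (Ideal.mul_mem_left _ _ hy') (Ideal.mul_mem_left _ (dB c) hy)

end P2

section P3
variable {A B : Type*} [CommRing A] [CommRing B] [Algebra A B] [Algebra.IsIntegral A B]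

lemma exists_monic_coeff_mem (I : Ideal A) (x : B)
    (hx : x ∈ Ideal.map (algebraMap A B) I) :
    ∃ f : A[X], f.Monic ∧ (∀ k < f.natDegree, f.coeff k ∈ I) ∧ Polynomial.aeval x f = 0 := by
  classical
  rw [Ideal.map] at hx
  rw [Ideal.span, Submodule.mem_span_set'] at hx
  obtain ⟨n, c, y, hxeq'⟩ := hx
  have hxeq := hxeq'.symm
  -- choose preimages in I
  have hch : ∀ i : Fin n, ∃ a : A, a ∈ I ∧ algebraMap A B a = (y i : B) := by
    intro i
    obtain ⟨a, ha, hae⟩ := (y i).2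
    exact ⟨a, ha, hae⟩
  choose a haI hae using hch
  -- the finitely generated subalgebra
  set M : Subalgebra A B := Algebra.adjoin A (Set.range c) with hM
  have hfg : (Subalgebra.toSubmodule M).FG :=
    fg_adjoin_of_finite (Set.finite_range c) (fun z _ => Algebra.IsIntegral.isIntegral z)
  haveI : Module.Finite A M := Module.Finite.iff_fg.mpr hfg
  have hcM : ∀ i, c i ∈ M := fun i => Algebra.subset_adjoin ⟨i, rfl⟩
  have hxM : x ∈ M := by
    rw [hxeq]
    refine Subalgebra.sum_mem _ fun i _ => ?_
    rw [smul_eq_mul, ← hae i]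
    exact M.mul_mem (hcM i) (M.algebraMap_mem _)
  -- multiplication by x as an endomorphism
  set φ : Module.End A M := (Algebra.lmul A M) ⟨x, hxM⟩ with hφ
  have hrange : LinearMap.range φ ≤ I • (⊤ : Submodule A M) := by
    rintro z ⟨m, rfl⟩
    have : φ m = ∑ i : Fin n, a i • (⟨c i * (m : B), M.mul_mem (hcM i) m.2⟩ : M) := by
      apply Subtype.ext
      push_cast
      show x * (m : B) = _
      rw [hxeq, Finset.sum_mul]
      congr 1
      ext i
      rw [← hae i]
      simp [Algebra.smul_def]
      ring
    rw [this]
    exact Submodule.sum_mem _ fun i _ =>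
      Submodule.smul_mem_smul (haI i) Submodule.mem_top
  obtain ⟨p, hmon, -, hcoeff, heval⟩ :=
    LinearMap.exists_monic_and_coeff_mem_pow_and_aeval_eq_zero_of_range_le_smul A φ I hrange
  refine ⟨p, hmon, fun k hk => ?_, ?_⟩
  · exact Ideal.pow_le_self (by omega) (hcoeff k)
  · have h1 : Polynomial.aeval φ p = (Algebra.lmul A M) (Polynomial.aeval (⟨x, hxM⟩ : M) p) :=
      Polynomial.aeval_algHom_apply (Algebra.lmul A M) _ p
    rw [heval] at h1
    have h2 : Polynomial.aeval (⟨x, hxM⟩ : M) p = 0 := by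
      have h : (0 : Module.End A M) 1 =
          ((Algebra.lmul A M) (Polynomial.aeval (⟨x, hxM⟩ : M) p)) 1 :=
        congrArg (fun (g : Module.End A M) => g 1) h1
      rw [LinearMap.zero_apply] at h
      have h' : (0 : M) = Polynomial.aeval (⟨x, hxM⟩ : M) p * 1 := h
      rw [mul_one] at h'
      exact h'.symm
    have h3 : ((Polynomial.aeval (⟨x, hxM⟩ : M) p : M) : B) = Polynomial.aeval x p :=
      Polynomial.aeval_subalgebra_coe p M ⟨x, hxM⟩
    rw [h2] at h3
    simpa using h3.symm

end P3

section P4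
variable {A B : Type*} [CommRing A] [CommRing B] [IsDomain A] [IsDomain B]
  [Algebra A B] [Algebra.IsIntegral A B] [IsIntegrallyClosed A]
  (hinj : Function.Injective (algebraMap A B))

include hinj

/-- Coefficients of the minimal polynomial of an element of 𝔭B lie in 𝔭. -/
lemma minpoly_coeff_mem (𝔭 : Ideal A) (h𝔭 : 𝔭.IsPrime) (x : B)
    (hx : x ∈ Ideal.map (algebraMap A B) 𝔭) :
    ∀ k < (minpoly A x).natDegree, (minpoly A x).coeff k ∈ 𝔭 := by
  classical
  haveI := (NoZeroSMulDivisors.iff_algebraMap_injective (R := A) (A := B)).mpr hinj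
  obtain ⟨f, hfmon, hfcoeff, hf0⟩ := exists_monic_coeff_mem 𝔭 x hx
  have hxint : IsIntegral A x := Algebra.IsIntegral.isIntegral x
  set P := minpoly A x with hP
  have hPmon : P.Monic := minpoly.monic hxint
  obtain ⟨g, hfg⟩ : P ∣ f := minpoly.isIntegrallyClosed_dvd hxint hf0
  have hgmon : g.Monic := hPmon.of_mul_monic_left (hfg ▸ hfmon)
  set π := Ideal.Quotient.mk 𝔭 with hπ
  have hfbar : f.map π = X ^ f.natDegree := by
    ext k
    rw [coeff_map, coeff_X_pow]
    rcases lt_trichotomy k f.natDegree with h | h | h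
    · rw [if_neg (by omega), Ideal.Quotient.eq_zero_iff_mem]
      exact hfcoeff k h
    · rw [if_pos h, h, hfmon.coeff_natDegree, map_one]
    · rw [if_neg (by omega), coeff_eq_zero_of_natDegree_lt h, map_zero]
  have hmul : (P.map π) * (g.map π) = X ^ f.natDegree := by
    rw [← Polynomial.map_mul, ← hfg, hfbar]
  have hP0 : P.map π ≠ 0 := (hPmon.map π).ne_zero
  have hg0 : g.map π ≠ 0 := (hgmon.map π).ne_zero
  have hdeg : (P.map π).natDegree + (g.map π).natDegree = f.natDegree := by
    rw [← natDegree_mul hP0 hg0, hmul, natDegree_X_pow]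
  have htr : (P.map π).natTrailingDegree + (g.map π).natTrailingDegree = f.natDegree := by
    rw [← natTrailingDegree_mul hP0 hg0, hmul, natTrailingDegree_X_pow]
  have h1 := natTrailingDegree_le_natDegree (P.map π)
  have h2 := natTrailingDegree_le_natDegree (g.map π)
  have hkey : (P.map π).natDegree ≤ (P.map π).natTrailingDegree := by omega
  intro k hk
  have hk' : k < (P.map π).natTrailingDegree := by
    rw [hPmon.natDegree_map π] at hkey
    omega
  have := coeff_eq_zero_of_lt_natTrailingDegree hk'
  rw [coeff_map] at this
  exact (Ideal.Quotient.eq_zero_iff_mem).mp this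

/-- Classical going-down. -/
lemma going_down_classical (𝔭₁ : Ideal A) (h₁ : 𝔭₁.IsPrime)
    (𝔮₂ : Ideal B) (hq₂ : 𝔮₂.IsPrime)
    (hle : 𝔭₁ ≤ Ideal.comap (algebraMap A B) 𝔮₂) :
    ∃ 𝔮₁ : Ideal B, 𝔮₁.IsPrime ∧ 𝔮₁ ≤ 𝔮₂ ∧ Ideal.comap (algebraMap A B) 𝔮₁ = 𝔭₁ := by
  classical
  haveI := (NoZeroSMulDivisors.iff_algebraMap_injective (R := A) (A := B)).mpr hinj
  have h1p : (1 : A) ∉ 𝔭₁ := fun h => h₁.ne_top ((Ideal.eq_top_iff_one _).mpr h)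
  have h1q : (1 : B) ∉ 𝔮₂ := fun h => hq₂.ne_top ((Ideal.eq_top_iff_one _).mpr h)
  let U : Submonoid B :=
    { carrier := {b | ∃ a, a ∉ 𝔭₁ ∧ ∃ t, t ∉ 𝔮₂ ∧ algebraMap A B a * t = b}
      one_mem' := ⟨1, h1p, 1, h1q, by simp⟩
      mul_mem' := by
        rintro u v ⟨a, ha, t, ht, rfl⟩ ⟨a', ha', t', ht', rfl⟩
        refine ⟨a * a', fun h => ?_, t * t', fun h => ?_, by rw [map_mul]; ring⟩
        · rcases h₁.mem_or_mem h with h | h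
          exacts [ha h, ha' h]
        · rcases hq₂.mem_or_mem h with h | h
          exacts [ht h, ht' h] }
  have hdisj : Disjoint (↑(Ideal.map (algebraMap A B) 𝔭₁) : Set B) (U : Set B) := by
    rw [Set.disjoint_left]
    rintro b hbI ⟨a, ha, t, ht, rfl⟩
    -- the core argument
    set x : B := algebraMap A B a * t with hxdef
    have ha0 : a ≠ 0 := fun h => ha (h ▸ 𝔭₁.zero_mem)
    have htint : IsIntegral A t := Algebra.IsIntegral.isIntegral t
    have hxint : IsIntegral A x := Algebra.IsIntegral.isIntegral x
    set Q := minpoly A t with hQ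
    have hQmon : Q.Monic := minpoly.monic htint
    set d := Q.natDegree with hd
    have hdpos : 0 < d := minpoly.natDegree_pos htint
    -- R = scaleRoots Q a kills x and is monic
    have hR0 : Polynomial.aeval x (Q.scaleRoots a) = 0 :=
      scaleRoots_aeval_eq_zero (minpoly.aeval A t)
    have hRmon : (Q.scaleRoots a).Monic := (monic_scaleRoots_iff a).mpr hQmon
    set P := minpoly A x with hP
    have hPmon : P.Monic := minpoly.monic hxint
    have hPdvd : P ∣ Q.scaleRoots a := minpoly.isIntegrallyClosed_dvd hxint hR0
    have hdegPle : P.natDegree ≤ d := by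
      have := Polynomial.natDegree_le_of_dvd hPdvd hRmon.ne_zero
      rwa [natDegree_scaleRoots] at this
    -- reverse: Q divides P.comp (C a * X)
    have hT0 : Polynomial.aeval t (P.comp (C a * X)) = 0 := by
      rw [aeval_comp]
      simp only [map_mul, aeval_C, aeval_X]
      rw [← hxdef]  -- aeval x P = 0
      exact minpoly.aeval A x
    have hTne : P.comp (C a * X) ≠ 0 := by
      intro h
      have hlc : (P.comp (C a * X)).leadingCoeff = P.leadingCoeff * (C a * X).leadingCoeff ^ P.natDegree := by
        apply leadingCoeff_comp
        rw [natDegree_C_mul_X a ha0]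
        exact one_ne_zero
      rw [h] at hlc
      simp only [leadingCoeff_zero] at hlc
      rw [hPmon.leadingCoeff, one_mul] at hlc
      have : (C a * X).leadingCoeff = a := by
        rw [leadingCoeff_mul, leadingCoeff_C, leadingCoeff_X, mul_one]
      rw [this] at hlc
      exact pow_ne_zero _ ha0 hlc.symm
    have hQdvdT : Q ∣ P.comp (C a * X) := minpoly.isIntegrallyClosed_dvd htint hT0
    have hdegQle : d ≤ P.natDegree := by
      have h1 := Polynomial.natDegree_le_of_dvd hQdvdT hTne
      have h2 : (P.comp (C a * X)).natDegree ≤ P.natDegree := by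
        have h4 := natDegree_comp_le (p := P) (q := C a * X)
        rwa [natDegree_C_mul_X a ha0, mul_one] at h4
      omega
    have hdegeq : P.natDegree = d := le_antisymm hdegPle hdegQle
    -- P = scaleRoots Q a
    have hPeq : P = Q.scaleRoots a := by
      obtain ⟨u, hu⟩ := hPdvd
      have hu_mon : u.Monic := hPmon.of_mul_monic_left (hu ▸ hRmon)
      have hdu : u.natDegree = 0 := by
        have := natDegree_mul hPmon.ne_zero hu_mon.ne_zero
        rw [← hu, natDegree_scaleRoots, ← hd, ← hdegeq] at this
        omega
      have : u = 1 := hu_mon.natDegree_eq_zero.mp hdu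
      rw [hu, this, mul_one]
    -- coefficients of P below degree are in 𝔭₁
    have hPcoeff := minpoly_coeff_mem hinj 𝔭₁ h₁ x hbI
    -- deduce coefficients of Q below degree are in 𝔭₁
    have hQcoeff : ∀ i < Q.natDegree, Q.coeff i ∈ 𝔭₁ := by
      intro i hi
      have hc : Q.coeff i * a ^ (Q.natDegree - i) ∈ 𝔭₁ := by
        have := hPcoeff i (by rw [← hP, hdegeq, hd]; exact hi)
        rw [← hP, hPeq] at this
        rwa [coeff_scaleRoots] at this
      rcases h₁.mem_or_mem hc with h | h
      · exact h
      · exact absurd (h₁.mem_of_pow_mem _ h) ha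
    -- now t ^ d ∈ 𝔮₂, contradiction
    have haev : Polynomial.aeval t Q = 0 := minpoly.aeval A t
    rw [Polynomial.aeval_eq_sum_range, Finset.sum_range_succ] at haev
    have htd : t ^ Q.natDegree ∈ 𝔮₂ := by
      have hterm : ∀ i ∈ Finset.range Q.natDegree, Q.coeff i • t ^ i ∈ 𝔮₂ := fun i hi => by
        rw [Algebra.smul_def]
        exact Ideal.mul_mem_right _ _ (hle (hQcoeff i (Finset.mem_range.mp hi)))
      have hsum : ∑ i ∈ Finset.range Q.natDegree, Q.coeff i • t ^ i ∈ 𝔮₂ :=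
        Ideal.sum_mem _ hterm
      rw [hQmon.coeff_natDegree, one_smul] at haev
      have heq : t ^ Q.natDegree = -∑ i ∈ Finset.range Q.natDegree, Q.coeff i • t ^ i :=
        eq_neg_of_add_eq_zero_right haev
      rw [heq]
      exact neg_mem hsum
    exact ht (hq₂.mem_of_pow_mem _ htd)
  obtain ⟨q, hqp, hIq, hqdisj⟩ := Ideal.exists_le_prime_disjoint _ U hdisj
  refine ⟨q, hqp, ?_, ?_⟩
  · intro z hz
    by_contra hzq
    exact Set.disjoint_left.mp hqdisj hz ⟨1, h1p, z, hzq, by simp⟩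
  · apply le_antisymm
    · intro a' ha'
      by_contra ha'p
      exact Set.disjoint_left.mp hqdisj ha' ⟨a', ha'p, 1, h1q, by simp⟩
    · exact Ideal.map_le_iff_le_comap.mp hIq

end P4


/-- going-down for prime differential ideals along integral extensions with
integrally closed base, in characteristic zero. -/
theorem going_down_diff_integral
    {A B : Type*} [CommRing A] [CommRing B] [IsDomain A] [IsDomain B]
    [Algebra ℚ A] [Algebra ℚ B] [Algebra A B] [Algebra.IsIntegral A B]
    [IsIntegrallyClosed A]
    (hinj : Function.Injective (algebraMap A B))
    (dA : A → A) (dB : B → B) (hdA : IsDerivationFn dA) (hdB : IsDerivationFn dB)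
    (hcompat : ∀ a : A, algebraMap A B (dA a) = dB (algebraMap A B a))
    (𝔭₁ 𝔭₂ : Ideal A) (h₁ : 𝔭₁.IsPrime) (h₂ : 𝔭₂.IsPrime) (h₁₂ : 𝔭₁ ≤ 𝔭₂)
    (h₁d : IsDiffIdeal dA 𝔭₁) (h₂d : IsDiffIdeal dA 𝔭₂)
    (𝔮₂ : Ideal B) (hq₂ : 𝔮₂.IsPrime) (hq₂d : IsDiffIdeal dB 𝔮₂)
    (hover : Ideal.comap (algebraMap A B) 𝔮₂ = 𝔭₂) :
    ∃ 𝔮₁ : Ideal B, 𝔮₁.IsPrime ∧ IsDiffIdeal dB 𝔮₁ ∧ 𝔮₁ ≤ 𝔮₂ ∧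
      Ideal.comap (algebraMap A B) 𝔮₁ = 𝔭₁ := by
  classical
  set I : Ideal B := Ideal.map (algebraMap A B) 𝔭₁ with hI
  have hIdiff : IsDiffIdeal dB I := map_isDiffIdeal hdB hcompat h₁d
  have hIrad : IsDiffIdeal dB I.radical := keigher_radical hdB hIdiff
  have hIle : I ≤ 𝔮₂ := Ideal.map_le_iff_le_comap.mpr (hover ▸ h₁₂)
  haveI := hq₂
  obtain ⟨𝔮₁, hmin, hle2⟩ := Ideal.exists_minimalPrimes_le hIle
  have hq1prime : 𝔮₁.IsPrime := hmin.1.1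
  have hIq1 : I ≤ 𝔮₁ := hmin.1.2
  have hradle : I.radical ≤ 𝔮₁ := hq1prime.radical_le_iff.mpr hIq1
  -- 𝔮₁ is a differential ideal
  have hdiff : IsDiffIdeal dB 𝔮₁ := by
    intro z hz
    obtain ⟨s, hs, hsz⟩ := exists_mul_mem_radical_of_minimal hmin hz
    have : s * dB z ∈ I.radical := radical_mul_deriv hdB hIrad hsz
    rcases hq1prime.mem_or_mem (hradle this) with h | h
    · exact absurd h hs
    · exact h
  -- 𝔮₁ lies over 𝔭₁
  have hup : 𝔭₁ ≤ Ideal.comap (algebraMap A B) 𝔮₁ := Ideal.map_le_iff_le_comap.mp hIq1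
  obtain ⟨q, hqp, hqle, hqcomap⟩ := going_down_classical hinj 𝔭₁ h₁ 𝔮₁ hq1prime hup
  have hIq : I ≤ q := Ideal.map_le_iff_le_comap.mpr (le_of_eq hqcomap.symm)
  have h𝔮₁q : 𝔮₁ ≤ q := hmin.2 ⟨hqp, hIq⟩ hqle
  have heq : q = 𝔮₁ := le_antisymm hqle h𝔮₁q
  refine ⟨𝔮₁, hq1prime, hdiff, hle2, ?_⟩
  rw [← heq, hqcomap]
end
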